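/- For every dimension d ≥ 2 there is a polytope Q_n ⊆ B₂^d with n vertices (n ≥ 2d) such that vol_d(B₂^d) − vol_d(Q_n) ≤ (64π/7) · d · n^{−2/(d−1)} · vol_d(B₂^d). -/

import Mathlib

open MeasureTheory Real

section InscribedPolytopeAux

open Metric Finset
open scoped ENNReal

private lemma ipva_pow_sub_pow_le {a b : ℝ} (m : ℕ) (hb : 0 ≤ b) (hba : b ≤ a) :
    a^m - b^m ≤ m * (a-b) * a^(m-1) := by
  have ha : 0 ≤ a := hb.trans hba
  have key := geom_sum₂_mul a b m
  rw [← key]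
  have hsum : (∑ i ∈ range m, a ^ i * b ^ (m - 1 - i)) ≤ m * a^(m-1) := by
    calc (∑ i ∈ range m, a ^ i * b ^ (m - 1 - i))
        ≤ ∑ i ∈ range m, a^(m-1) := by
          apply Finset.sum_le_sum
          intro i hi
          rw [Finset.mem_range] at hi
          calc a ^ i * b ^ (m - 1 - i) ≤ a ^ i * a ^ (m - 1 - i) := by
                apply mul_le_mul_of_nonneg_left (pow_le_pow_left₀ hb hba _) (pow_nonneg ha _)
            _ = a ^ (m - 1) := by
                rw [← pow_add]
                congr 1
                omega
      _ = m * a^(m-1) := by rw [Finset.sum_const, Finset.card_range, nsmul_eq_mul]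
  calc (∑ i ∈ range m, a ^ i * b ^ (m - 1 - i)) * (a - b)
      ≤ (m * a^(m-1)) * (a - b) := by
        apply mul_le_mul_of_nonneg_right hsum (by linarith)
    _ = m * (a-b) * a^(m-1) := by ring

private lemma ipva_two_mul_le_pow : ∀ m : ℕ, 3 ≤ m → 2*((m:ℝ)+1) ≤ 2.79^m := by
  intro m hm
  induction m with
  | zero => omega
  | succ k ih =>
    rcases Nat.lt_or_ge k 3 with hk | hk
    · interval_cases k
      · omega
      · omega
      · norm_num
    · have h1 := ih hk
      have h2 : (2.79:ℝ)^(k+1) = 2.79 * 2.79^k := by ring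
      have hk3 : (3:ℝ) ≤ k := by exact_mod_cast hk
      push_cast
      push_cast at h1
      nlinarith [pow_pos (by norm_num : (0:ℝ) < 2.79) k]

private lemma ipva_packing_card (d : ℕ) (hd : 1 ≤ d) (S : Finset (EuclideanSpace ℝ (Fin d)))
    (δ : ℝ) (hδ : 0 < δ) (hδ1 : δ ≤ 2)
    (hS : (S : Set (EuclideanSpace ℝ (Fin d))) ⊆ sphere 0 1)
    (hsep : ∀ p ∈ S, ∀ q ∈ S, p ≠ q → δ ≤ dist p q) :
    (S.card : ℝ) * (δ/2)^d + (1-δ/2)^d ≤ (1+δ/2)^d := by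
  haveI : Nonempty (Fin d) := ⟨⟨0, hd⟩⟩
  set B := volume (ball (0:EuclideanSpace ℝ (Fin d)) 1) with hB
  have hB0 : B ≠ 0 := (measure_ball_pos _ _ one_pos).ne'
  have hBtop : B ≠ ⊤ := measure_ball_lt_top.ne
  have hrd : ∀ r : ℝ, 0 ≤ r →
      volume (ball (0:EuclideanSpace ℝ (Fin d)) r) = ENNReal.ofReal (r^d) * B := by
    intro r hr
    rw [Measure.addHaar_ball _ _ hr, finrank_euclideanSpace_fin]
  have hcb : volume (closedBall (0:EuclideanSpace ℝ (Fin d)) (1+δ/2))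
      = ENNReal.ofReal ((1+δ/2)^d) * B := by
    rw [Measure.addHaar_closedBall _ _ (by linarith), finrank_euclideanSpace_fin]
  set U : Set (EuclideanSpace ℝ (Fin d)) := ⋃ p ∈ S, ball p (δ/2) with hU
  have hUmeas : MeasurableSet U :=
    MeasurableSet.biUnion S.countable_toSet (fun p _ => measurableSet_ball)
  have hUvol : volume U = (S.card : ℝ≥0∞) * ENNReal.ofReal ((δ/2)^d) * B := by
    rw [hU, measure_biUnion_finset ?_ (fun p _ => measurableSet_ball)]
    · have heach : ∀ p ∈ S, volume (ball p (δ/2)) = ENNReal.ofReal ((δ/2)^d) * B := by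
        intro p _
        rw [Measure.addHaar_ball _ _ (by linarith : (0:ℝ) ≤ δ/2), finrank_euclideanSpace_fin]
      rw [Finset.sum_congr rfl heach, Finset.sum_const, nsmul_eq_mul, mul_assoc]
    · intro p hp q hq hpq
      exact ball_disjoint_ball (by linarith [hsep p hp q hq hpq])
  have hdisj : Disjoint (ball (0:EuclideanSpace ℝ (Fin d)) (1-δ/2)) U := by
    rw [Set.disjoint_left]
    intro z hz hzU
    rw [hU, Set.mem_iUnion₂] at hzU
    obtain ⟨p, hp, hzp⟩ := hzU
    rw [mem_ball] at hz hzp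
    have hp1 : dist p (0:EuclideanSpace ℝ (Fin d)) = 1 := by
      simpa [mem_sphere_iff_norm] using hS hp
    have h1 := dist_triangle p z (0:EuclideanSpace ℝ (Fin d))
    rw [dist_comm p z] at h1
    linarith
  have hsub : ball (0:EuclideanSpace ℝ (Fin d)) (1-δ/2) ∪ U
      ⊆ closedBall (0:EuclideanSpace ℝ (Fin d)) (1+δ/2) := by
    intro z hz
    rcases hz with hz | hz
    · rw [mem_ball] at hz; rw [mem_closedBall]; linarith
    · rw [hU, Set.mem_iUnion₂] at hz
      obtain ⟨p, hp, hzp⟩ := hz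
      rw [mem_ball] at hzp
      have hp1 : dist p (0:EuclideanSpace ℝ (Fin d)) = 1 := by
        simpa [mem_sphere_iff_norm] using hS hp
      rw [mem_closedBall]
      calc dist z 0 ≤ dist z p + dist p 0 := dist_triangle _ _ _
        _ ≤ δ/2 + 1 := by linarith
        _ = 1 + δ/2 := by ring
  have key : ENNReal.ofReal ((1-δ/2)^d) * B + (S.card : ℝ≥0∞) * ENNReal.ofReal ((δ/2)^d) * B
      ≤ ENNReal.ofReal ((1+δ/2)^d) * B := by
    calc ENNReal.ofReal ((1-δ/2)^d) * B + (S.card : ℝ≥0∞) * ENNReal.ofReal ((δ/2)^d) * B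
        = volume (ball (0:EuclideanSpace ℝ (Fin d)) (1-δ/2)) + volume U := by
          rw [hUvol, hrd _ (by linarith)]
      _ = volume (ball (0:EuclideanSpace ℝ (Fin d)) (1-δ/2) ∪ U) :=
          (measure_union hdisj hUmeas).symm
      _ ≤ volume (closedBall (0:EuclideanSpace ℝ (Fin d)) (1+δ/2)) := measure_mono hsub
      _ = ENNReal.ofReal ((1+δ/2)^d) * B := hcb
  have key2 : ENNReal.ofReal ((1-δ/2)^d) + (S.card : ℝ≥0∞) * ENNReal.ofReal ((δ/2)^d)
      ≤ ENNReal.ofReal ((1+δ/2)^d) := by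
    rw [← ENNReal.mul_le_mul_iff_left hB0 hBtop]
    rw [add_mul]
    exact key
  have key3 : ENNReal.ofReal ((1-δ/2)^d + (S.card : ℝ) * (δ/2)^d)
      ≤ ENNReal.ofReal ((1+δ/2)^d) := by
    rw [ENNReal.ofReal_add (pow_nonneg (by linarith) _) (by positivity),
      ENNReal.ofReal_mul (by positivity)]
    rw [ENNReal.ofReal_natCast]
    exact key2
  rw [ENNReal.ofReal_le_ofReal_iff (by positivity)] at key3
  linarith

private lemma ipva_exists_net (d : ℕ) (hd : 1 ≤ d) (δ : ℝ) (hδ : 0 < δ) (hδ1 : δ ≤ 2) :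
    ∃ S : Finset (EuclideanSpace ℝ (Fin d)),
      (S : Set (EuclideanSpace ℝ (Fin d))) ⊆ sphere 0 1 ∧
      (∀ x ∈ sphere (0 : EuclideanSpace ℝ (Fin d)) 1, ∃ p ∈ S, dist x p ≤ δ) ∧
      (S.card : ℝ) * (δ/2)^d + (1-δ/2)^d ≤ (1+δ/2)^d := by
  classical
  set P : ℕ → Prop := fun k => ∃ S : Finset (EuclideanSpace ℝ (Fin d)),
    (S : Set (EuclideanSpace ℝ (Fin d))) ⊆ sphere 0 1 ∧
    (∀ p ∈ S, ∀ q ∈ S, p ≠ q → δ ≤ dist p q) ∧ S.card = k with hP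
  have hP0 : P 0 := ⟨∅, by simp, by simp, rfl⟩
  set M : ℕ := ⌈(1+δ/2)^d / (δ/2)^d⌉₊ with hM
  have hcard_le : ∀ k, P k → k ≤ M := by
    rintro k ⟨S, hS, hsep, rfl⟩
    have h1 := ipva_packing_card d hd S δ hδ hδ1 hS hsep
    have h2 : (0:ℝ) < (δ/2)^d := pow_pos (by linarith) _
    have h3 : (S.card : ℝ) ≤ (1+δ/2)^d / (δ/2)^d := by
      rw [le_div_iff₀ h2]
      nlinarith [pow_nonneg (by linarith : (0:ℝ) ≤ 1 - δ/2) d]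
    exact_mod_cast h3.trans (Nat.le_ceil _)
  set k := Nat.findGreatest P M with hk
  have hPk : P k := Nat.findGreatest_spec (Nat.zero_le M) hP0
  obtain ⟨S, hS, hsep, hcard⟩ := hPk
  refine ⟨S, hS, ?_, ?_⟩
  · intro x hx
    by_contra hno
    push_neg at hno
    have hxS : x ∉ S := by
      intro hxS
      have := hno x hxS
      simp at this
      linarith
    have hP1 : P (k + 1) := by
      refine ⟨insert x S, ?_, ?_, ?_⟩
      · rw [Finset.coe_insert]
        exact Set.insert_subset hx hS
      · intro p hp q hq hpq
        rcases Finset.mem_insert.1 hp with hpx | hp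
        · rcases Finset.mem_insert.1 hq with hqx | hq
          · exact absurd (hpx.trans hqx.symm) hpq
          · rw [hpx]; exact le_of_lt (hno q hq)
        · rcases Finset.mem_insert.1 hq with hqx | hq
          · rw [hqx, dist_comm]; exact le_of_lt (hno p hp)
          · exact hsep p hp q hq hpq
      · rw [Finset.card_insert_of_notMem hxS, hcard]
    have := Nat.le_findGreatest (hcard_le _ hP1) hP1
    omega
  · rw [hcard]
    exact (by
      have := ipva_packing_card d hd S δ hδ hδ1 hS hsep
      rw [hcard] at this
      exact this)

private lemma ipva_exists_angle {a b : ℝ} (h : a^2 + b^2 = 1) :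
    ∃ φ, 0 ≤ φ ∧ φ < 2*π ∧ Real.cos φ = a ∧ Real.sin φ = b := by
  have ha : -1 ≤ a ∧ a ≤ 1 := by constructor <;> nlinarith
  have hψc : Real.cos (arccos a) = a := Real.cos_arccos ha.1 ha.2
  have hψs : Real.sin (arccos a) = |b| := by
    rw [Real.sin_arccos]
    have : 1 - a^2 = b^2 := by linarith
    rw [this, Real.sqrt_sq_eq_abs]
  rcases le_or_gt 0 b with hb | hb
  · refine ⟨arccos a, Real.arccos_nonneg a, ?_, hψc, by rw [hψs, abs_of_nonneg hb]⟩
    have := Real.arccos_le_pi a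
    have := Real.pi_pos
    linarith
  · refine ⟨2*π - arccos a, ?_, ?_, ?_, ?_⟩
    · have := Real.arccos_le_pi a
      have := Real.pi_pos
      linarith
    · have h0 : 0 < arccos a := by
        rcases (Real.arccos_nonneg a).eq_or_lt with h0 | h0
        · exfalso
          rw [← h0] at hψs
          simp [Real.sin_zero] at hψs
          rw [abs_of_neg hb] at hψs
          linarith
        · exact h0
      linarith
    · rw [Real.cos_sub, Real.cos_two_pi, Real.sin_two_pi]
      simp [hψc]
    · rw [Real.sin_sub, Real.cos_two_pi, Real.sin_two_pi]
      simp [hψs, abs_of_neg hb]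

private noncomputable def ipvaVtx (n k : ℕ) : EuclideanSpace ℝ (Fin 2) :=
  (WithLp.equiv 2 (Fin 2 → ℝ)).symm ![Real.cos (2*π*k/n), Real.sin (2*π*k/n)]

private lemma ipvaVtx_apply0 (n k : ℕ) : ipvaVtx n k 0 = Real.cos (2*π*k/n) := rfl
private lemma ipvaVtx_apply1 (n k : ℕ) : ipvaVtx n k 1 = Real.sin (2*π*k/n) := rfl

private lemma ipva_polygon_net (n : ℕ) (hn : 1 ≤ n) :
    ∃ S : Finset (EuclideanSpace ℝ (Fin 2)),
      (S : Set (EuclideanSpace ℝ (Fin 2))) ⊆ sphere 0 1 ∧ S.card ≤ n ∧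
      ∀ x ∈ sphere (0 : EuclideanSpace ℝ (Fin 2)) 1, ∃ p ∈ S, dist x p ≤ 2*π/n := by
  have hπ := Real.pi_pos
  have hn0 : (0:ℝ) < n := by exact_mod_cast hn
  classical
  refine ⟨(Finset.range n).image (ipvaVtx n), ?_, ?_, ?_⟩
  · intro p hp
    rw [Finset.coe_image] at hp
    obtain ⟨k, _, rfl⟩ := hp
    rw [mem_sphere_zero_iff_norm, EuclideanSpace.norm_eq]
    rw [Fin.sum_univ_two, ipvaVtx_apply0, ipvaVtx_apply1]
    rw [Real.norm_eq_abs, Real.norm_eq_abs, sq_abs, sq_abs,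
      Real.cos_sq_add_sin_sq]
    exact Real.sqrt_one
  · exact (Finset.card_image_le).trans (by rw [Finset.card_range])
  · intro x hx
    have hx1 : (x 0)^2 + (x 1)^2 = 1 := by
      rw [mem_sphere_zero_iff_norm, EuclideanSpace.norm_eq, Fin.sum_univ_two,
        Real.norm_eq_abs, Real.norm_eq_abs, sq_abs, sq_abs] at hx
      have h0 : (0:ℝ) ≤ (x 0)^2 + (x 1)^2 := by positivity
      nlinarith [Real.sq_sqrt h0, hx]
    obtain ⟨φ, hφ0, hφ2, hcos, hsin⟩ := ipva_exists_angle hx1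
    set k := ⌊φ * n / (2*π)⌋₊ with hk
    have hkn : k < n := by
      have harg0 : 0 ≤ φ * n / (2*π) := by positivity
      have : φ * n / (2*π) < n := by
        rw [div_lt_iff₀ (by linarith)]
        calc φ * n < 2*π*n := by nlinarith
          _ = n * (2*π) := by ring
      exact (Nat.floor_lt harg0).2 this
    refine ⟨ipvaVtx n k, Finset.mem_image.2 ⟨k, Finset.mem_range.2 hkn, rfl⟩, ?_⟩
    set θ := 2*π*k/n with hθ
    have hkle : (k:ℝ) ≤ φ * n / (2*π) := Nat.floor_le (by positivity)
    have hklt : φ * n / (2*π) < k + 1 := Nat.lt_floor_add_one _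
    have hθφ : θ ≤ φ := by
      rw [hθ, div_le_iff₀ hn0]
      rw [le_div_iff₀ (by linarith)] at hkle
      linarith
    have hφθ : φ - θ ≤ 2*π/n := by
      rw [div_lt_iff₀ (by linarith)] at hklt
      rw [hθ, sub_le_iff_le_add, ← add_div, le_div_iff₀ hn0]
      nlinarith
    have hdist : dist x (ipvaVtx n k) ≤ 2*π/n := by
      rw [EuclideanSpace.dist_eq, Fin.sum_univ_two, ipvaVtx_apply0, ipvaVtx_apply1]
      rw [Real.dist_eq, Real.dist_eq, sq_abs, sq_abs, ← hcos, ← hsin]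
      have hexpand : (Real.cos φ - Real.cos θ)^2 + (Real.sin φ - Real.sin θ)^2
          = 2 - 2*Real.cos (φ - θ) := by
        rw [Real.cos_sub]
        nlinarith [Real.sin_sq_add_cos_sq φ, Real.sin_sq_add_cos_sq θ]
      rw [hexpand]
      have hcosb := Real.one_sub_sq_div_two_le_cos (x := φ - θ)
      have h1 : 2 - 2*Real.cos (φ - θ) ≤ (φ - θ)^2 := by linarith
      calc Real.sqrt (2 - 2*Real.cos (φ - θ)) ≤ Real.sqrt ((φ - θ)^2) :=
            Real.sqrt_le_sqrt h1
        _ = |φ - θ| := Real.sqrt_sq_eq_abs _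
        _ = φ - θ := abs_of_nonneg (by linarith)
        _ ≤ 2*π/n := hφθ
    exact hdist

private lemma ipva_net_hull {E : Type*} [NormedAddCommGroup E] [InnerProductSpace ℝ E]
    [FiniteDimensional ℝ E] [Nontrivial E] (V : Finset E) (δ : ℝ)
    (hV : (V : Set E) ⊆ sphere (0:E) 1)
    (hnet : ∀ x ∈ sphere (0:E) 1, ∃ p ∈ V, dist x p ≤ δ) :
    closedBall (0:E) (1 - δ^2/2) ⊆ convexHull ℝ (V : Set E) := by
  intro x hx
  by_contra hxK
  obtain ⟨f, u, hfu, huf⟩ := geometric_hahn_banach_closed_point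
    (convex_convexHull ℝ _) ((V.finite_toSet.isCompact_convexHull ℝ).isClosed) hxK
  set y := (InnerProductSpace.toDual ℝ E).symm f with hy
  have hyz : ∀ z, @inner ℝ _ _ y z = f z := fun z => InnerProductSpace.toDual_symm_apply
  have hxn : ‖x‖ ≤ 1 - δ^2/2 := mem_closedBall_zero_iff.1 hx
  have hfx : f x ≤ ‖y‖ * ‖x‖ := by
    have h1 := f.le_opNorm x
    rw [Real.norm_eq_abs] at h1
    rw [hy, LinearIsometryEquiv.norm_map]
    exact (le_abs_self _).trans h1
  rcases eq_or_ne y 0 with h0 | h0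
  · obtain ⟨w, hw⟩ := exists_norm_eq E (zero_le_one)
    obtain ⟨v, hvV, hvd⟩ := hnet w (by simpa [mem_sphere_zero_iff_norm] using hw)
    have h1 : f v < f x := lt_trans (hfu v (subset_convexHull ℝ _ hvV)) huf
    have h2 : f v = 0 := by rw [← hyz, h0, inner_zero_left]
    have h3 : f x = 0 := by rw [← hyz, h0, inner_zero_left]
    rw [h2, h3] at h1; exact lt_irrefl _ h1
  · have hyn : 0 < ‖y‖ := norm_pos_iff.2 h0
    set w := ‖y‖⁻¹ • y with hwdef
    have hwn : ‖w‖ = 1 := by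
      rw [hwdef, norm_smul, norm_inv, norm_norm, inv_mul_cancel₀ hyn.ne']
    obtain ⟨v, hvV, hvd⟩ := hnet w (by simpa [mem_sphere_zero_iff_norm] using hwn)
    have hvn : ‖v‖ = 1 := by simpa [mem_sphere_zero_iff_norm] using hV hvV
    have hδ0 : 0 ≤ δ := le_trans dist_nonneg hvd
    have hwv : ‖w - v‖^2 ≤ δ^2 := by
      have : ‖w - v‖ ≤ δ := by rwa [← dist_eq_norm]
      exact pow_le_pow_left₀ (norm_nonneg _) this 2
    have hinner : 1 - δ^2/2 ≤ @inner ℝ _ _ w v := by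
      have := norm_sub_sq_real w v
      rw [hwn, hvn] at this
      nlinarith
    have hyv : f v = ‖y‖ * @inner ℝ _ _ w v := by
      rw [← hyz, hwdef, real_inner_smul_left]
      field_simp
    have : f x ≤ f v := by
      calc f x ≤ ‖y‖ * ‖x‖ := hfx
        _ ≤ ‖y‖ * (1 - δ^2/2) := by nlinarith
        _ ≤ ‖y‖ * @inner ℝ _ _ w v := by nlinarith
        _ = f v := hyv.symm
    exact absurd (lt_trans (hfu v (subset_convexHull ℝ _ hvV)) huf) (not_lt.2 this)

private lemma ipva_pad_finset (d n : ℕ) (hd : 1 ≤ d) (hn : 1 ≤ n)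
    (S : Finset (EuclideanSpace ℝ (Fin d)))
    (hS : (S : Set (EuclideanSpace ℝ (Fin d))) ⊆ sphere 0 1) (hcard : S.card ≤ n) :
    ∃ V : Finset (EuclideanSpace ℝ (Fin d)), S ⊆ V ∧ V.card = n ∧
      (V : Set (EuclideanSpace ℝ (Fin d))) ⊆ closedBall 0 1 := by
  classical
  have hn0 : (0:ℝ) < n := by exact_mod_cast hn
  set u : EuclideanSpace ℝ (Fin d) := EuclideanSpace.single (⟨0, hd⟩ : Fin d) (1:ℝ) with hu
  have hun : ‖u‖ = 1 := by rw [hu, EuclideanSpace.norm_single]; simp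
  set g : ℕ → EuclideanSpace ℝ (Fin d) := fun i => ((i:ℝ)/n) • u with hg
  have hgnorm : ∀ i : ℕ, ‖g i‖ = (i:ℝ)/n := by
    intro i
    rw [hg]
    simp only [norm_smul, hun, mul_one, Real.norm_eq_abs]
    rw [abs_of_nonneg (by positivity)]
  have hginj : Function.Injective g := by
    intro i j hij
    have h1 : ‖g i‖ = ‖g j‖ := by rw [hij]
    rw [hgnorm, hgnorm, div_eq_div_iff hn0.ne' hn0.ne'] at h1
    have h2 : (i:ℝ) = j := mul_right_cancel₀ hn0.ne' h1
    exact_mod_cast h2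
  set T : Finset (EuclideanSpace ℝ (Fin d)) := (Finset.range (n - S.card)).image g with hT
  have hTcard : T.card = n - S.card := by
    rw [hT, Finset.card_image_of_injective _ hginj, Finset.card_range]
  have hTdisj : Disjoint S T := by
    rw [Finset.disjoint_right]
    intro p hp hpS
    obtain ⟨i, hi, rfl⟩ := Finset.mem_image.1 hp
    rw [Finset.mem_range] at hi
    have h1 : ‖g i‖ = 1 := by
      have := hS hpS
      rwa [mem_sphere_zero_iff_norm] at this
    rw [hgnorm] at h1
    have : (i:ℝ) < n := by
      have : i < n := by omega
      exact_mod_cast this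
    rw [div_eq_one_iff_eq hn0.ne'] at h1
    linarith
  refine ⟨S ∪ T, Finset.subset_union_left, ?_, ?_⟩
  · rw [Finset.card_union_of_disjoint hTdisj, hTcard]
    omega
  · intro p hp
    rw [Finset.coe_union, Set.mem_union] at hp
    rcases hp with hp | hp
    · exact sphere_subset_closedBall (hS hp)
    · obtain ⟨i, hi, rfl⟩ := Finset.mem_image.1 hp
      rw [Finset.mem_range] at hi
      rw [mem_closedBall_zero_iff, hgnorm]
      rw [div_le_one hn0]
      have : i ≤ n := by omega
      exact_mod_cast this

private lemma ipva_deficit_le (d : ℕ) (V : Finset (EuclideanSpace ℝ (Fin d)))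
    (r : ℝ) (hr : 0 ≤ r)
    (hsub : closedBall (0 : EuclideanSpace ℝ (Fin d)) r ⊆
      convexHull ℝ (V : Set (EuclideanSpace ℝ (Fin d)))) :
    (volume (closedBall (0 : EuclideanSpace ℝ (Fin d)) 1)).toReal -
      (volume (convexHull ℝ (V : Set (EuclideanSpace ℝ (Fin d))))).toReal ≤
      (1 - r^d) * (volume (closedBall (0 : EuclideanSpace ℝ (Fin d)) 1)).toReal := by
  set B := volume (closedBall (0 : EuclideanSpace ℝ (Fin d)) 1) with hB
  have hBtop : B ≠ ⊤ := measure_closedBall_lt_top.ne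
  have h1 : volume (closedBall (0 : EuclideanSpace ℝ (Fin d)) r) ≤
      volume (convexHull ℝ (V : Set (EuclideanSpace ℝ (Fin d)))) := measure_mono hsub
  have hhull_fin : volume (convexHull ℝ (V : Set (EuclideanSpace ℝ (Fin d)))) ≠ ⊤ := by
    have hbd : Bornology.IsBounded (convexHull ℝ (V : Set (EuclideanSpace ℝ (Fin d)))) :=
      (V.finite_toSet.isCompact_convexHull ℝ).isBounded
    exact hbd.measure_lt_top.ne
  have h2 : (volume (closedBall (0 : EuclideanSpace ℝ (Fin d)) r)).toReal ≤
      (volume (convexHull ℝ (V : Set (EuclideanSpace ℝ (Fin d))))).toReal :=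
    ENNReal.toReal_mono hhull_fin h1
  have h3 : (volume (closedBall (0 : EuclideanSpace ℝ (Fin d)) r)).toReal = r^d * B.toReal := by
    rw [Measure.addHaar_closedBall' _ _ hr, finrank_euclideanSpace_fin, ← hB,
      ENNReal.toReal_mul, ENNReal.toReal_ofReal (by positivity)]
  nlinarith [ENNReal.toReal_nonneg (a := B)]

set_option maxHeartbeats 1000000 in
private lemma ipva_net_card_le (d n N : ℕ) (hd : 3 ≤ d) (hn : 1 ≤ n) (δ c : ℝ)
    (hc : c = Real.sqrt (128*π/7)) (hδdef : δ = c * (n:ℝ) ^ (-(1/((d:ℝ)-1))))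
    (hδpos : 0 < δ) (hδd : (d:ℝ)*δ^2/2 ≤ 1)
    (hpack : (N:ℝ)*(δ/2)^d + (1-δ/2)^d ≤ (1+δ/2)^d) : N ≤ n := by
  have hπ := Real.pi_pos
  have hc0 : 0 ≤ c := hc ▸ Real.sqrt_nonneg _
  have hc2 : c^2 = 128*π/7 := by rw [hc]; exact Real.sq_sqrt (by positivity)
  have hn0 : (0:ℝ) < n := by exact_mod_cast hn
  obtain ⟨m, rfl⟩ : ∃ m, d = m + 1 := ⟨d - 1, by omega⟩
  have hm2 : 2 ≤ m := by omega
  have hm2R : (2:ℝ) ≤ (m:ℝ) := by exact_mod_cast hm2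
  have hmR : ((m:ℝ)) = ((m+1:ℕ):ℝ) - 1 := by push_cast; ring
  have hmpos : (0:ℝ) < m := by linarith
  have hcast : ((m+1:ℕ):ℝ) = (m:ℝ)+1 := by push_cast; ring
  have hδm : (n:ℝ) * δ^m = c^m := by
    rw [hδdef, mul_pow, ← hmR]
    rw [← Real.rpow_natCast ((n:ℝ) ^ (-(1/(m:ℝ)))) m, ← Real.rpow_mul hn0.le]
    have he : (-(1/(m:ℝ))) * ((m:ℕ):ℝ) = -1 := by
      field_simp
    rw [he, Real.rpow_neg_one]
    field_simp
  have hδsq : ((m:ℝ)+1) * δ^2 ≤ 2 := by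
    rw [hcast] at hδd
    linarith
  have h3δ : 3*δ^2 ≤ 2 := by nlinarith [sq_nonneg δ]
  have hδ1 : δ ≤ 1 := by linarith [sq_nonneg (δ - 1)]
  have key : 2*((m:ℝ)+1)*(2+δ)^m ≤ c^m := by
    rcases eq_or_lt_of_le hm2 with hm2' | hm3
    · have hm2'' : m = 2 := hm2'.symm
      subst hm2''
      have hδ82 : δ ≤ 0.82 := by linarith [sq_nonneg (δ - 0.82)]
      have hpi := Real.pi_gt_d6
      rw [hc2]
      nlinarith
    · have hm3' : 3 ≤ m := hm3
      have hm3R : (3:ℝ) ≤ (m:ℝ) := by exact_mod_cast hm3'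
      have h4δ : 4*δ^2 ≤ 2 := by nlinarith [sq_nonneg δ]
      have hδ71 : δ ≤ 0.71 := by linarith [sq_nonneg (δ - 0.71)]
      have hc757 : (7.57:ℝ) ≤ c := by
        have hpi := Real.pi_gt_d6
        by_contra hcon
        push_neg at hcon
        have hsq : c^2 < 7.57^2 := by nlinarith
        rw [hc2] at hsq
        norm_num at hsq
        linarith
      have h1 : 2*((m:ℝ)+1) ≤ 2.79^m := ipva_two_mul_le_pow m hm3'
      have h2 : (2+δ)^m ≤ 2.71^m := pow_le_pow_left₀ (by linarith) (by linarith) m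
      have h3 : (2.79:ℝ)^m * 2.71^m ≤ 7.57^m := by
        rw [← mul_pow]
        exact pow_le_pow_left₀ (by norm_num) (by norm_num) m
      have h4 : (7.57:ℝ)^m ≤ c^m := pow_le_pow_left₀ (by norm_num) hc757 m
      calc 2*((m:ℝ)+1)*(2+δ)^m ≤ 2.79^m * 2.71^m := by
            apply mul_le_mul h1 h2 (by positivity) (by positivity)
        _ ≤ 7.57^m := h3
        _ ≤ c^m := h4
  have hsub : (1+δ/2)^(m+1) - (1-δ/2)^(m+1) ≤ ((m:ℝ)+1) * δ * (1+δ/2)^m := by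
    have h := ipva_pow_sub_pow_le (a := 1+δ/2) (b := 1-δ/2) (m+1) (by linarith) (by linarith)
    simp only [Nat.add_sub_cancel] at h
    rw [hcast] at h
    calc (1+δ/2)^(m+1) - (1-δ/2)^(m+1) ≤ ((m:ℝ)+1) * ((1+δ/2) - (1-δ/2)) * (1+δ/2)^m := h
      _ = ((m:ℝ)+1) * δ * (1+δ/2)^m := by ring
  have hNn : (N:ℝ) * (δ/2)^(m+1) ≤ (n:ℝ) * (δ/2)^(m+1) := by
    have e2 : ((1+δ/2):ℝ)^m = (2+δ)^m / 2^m := by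
      rw [show (1+δ/2 : ℝ) = (2+δ)/2 by ring, div_pow]
    have e3 : ((δ/2):ℝ)^(m+1) = δ^m * δ / 2^(m+1) := by
      rw [div_pow, pow_succ]
    have e4 : (n:ℝ) * (δ/2)^(m+1) = c^m * δ / 2^(m+1) := by
      rw [e3]
      linear_combination (δ / 2^(m+1)) * hδm
    calc (N:ℝ) * (δ/2)^(m+1) ≤ (1+δ/2)^(m+1) - (1-δ/2)^(m+1) := by linarith
      _ ≤ ((m:ℝ)+1) * δ * (1+δ/2)^m := hsub
      _ = (2*((m:ℝ)+1)*(2+δ)^m) * δ / 2^(m+1) := by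
          rw [e2, pow_succ]
          ring
      _ ≤ c^m * δ / 2^(m+1) := by
          apply div_le_div_of_nonneg_right ?_ (by positivity)
          · exact mul_le_mul_of_nonneg_right key hδpos.le
      _ = (n:ℝ) * (δ/2)^(m+1) := e4.symm
  have hpow : (0:ℝ) < (δ/2)^(m+1) := by positivity
  have hfin : (N:ℝ) ≤ (n:ℝ) := le_of_mul_le_mul_right hNn hpow
  exact_mod_cast hfin

end InscribedPolytopeAux

set_option maxHeartbeats 1000000 in
theorem inscribed_polytope_volume_approx (d n : ℕ) (hd : 2 ≤ d) (hn : 2 * d ≤ n) :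
    ∃ V : Finset (EuclideanSpace ℝ (Fin d)), V.card = n ∧
      ↑V ⊆ Metric.closedBall (0 : EuclideanSpace ℝ (Fin d)) 1 ∧
      (volume (Metric.closedBall (0 : EuclideanSpace ℝ (Fin d)) 1)).toReal -
          (volume (convexHull ℝ (V : Set (EuclideanSpace ℝ (Fin d))))).toReal ≤
        (64 * π / 7) * d * (n : ℝ) ^ (-(2 / ((d : ℝ) - 1))) *
          (volume (Metric.closedBall (0 : EuclideanSpace ℝ (Fin d)) 1)).toReal := by
  classical
  have hπ := Real.pi_pos
  have hn1 : 1 ≤ n := by omega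
  have hd1 : 1 ≤ d := by omega
  have hn0 : (0:ℝ) < n := by exact_mod_cast hn1
  have hdR : (2:ℝ) ≤ d := by exact_mod_cast hd
  set vB := (volume (Metric.closedBall (0 : EuclideanSpace ℝ (Fin d)) 1)).toReal with hvB
  have hvB0 : 0 ≤ vB := ENNReal.toReal_nonneg
  set K : ℝ := 64 * π / 7 * d * (n:ℝ) ^ (-(2 / ((d:ℝ) - 1))) with hKdef
  rcases le_or_gt 1 K with hK1 | hK1
  · obtain ⟨V, -, hVcard, hVsub⟩ := ipva_pad_finset d n hd1 hn1 ∅ (by simp) (by simp)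
    refine ⟨V, hVcard, hVsub, ?_⟩
    have h0 : 0 ≤ (volume (convexHull ℝ (V : Set (EuclideanSpace ℝ (Fin d))))).toReal :=
      ENNReal.toReal_nonneg
    have h1 : (1:ℝ) * vB ≤ K * vB := mul_le_mul_of_nonneg_right hK1 hvB0
    linarith
  · set c := Real.sqrt (128 * π / 7) with hcdef
    set δ := c * (n:ℝ) ^ (-(1 / ((d:ℝ) - 1))) with hδdef
    have hd1R : (0:ℝ) < (d:ℝ) - 1 := by linarith
    have hc0 : 0 < c := Real.sqrt_pos.2 (by positivity)
    have hrp : (0:ℝ) < (n:ℝ) ^ (-(1 / ((d:ℝ) - 1))) := Real.rpow_pos_of_pos hn0 _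
    have hδpos : 0 < δ := mul_pos hc0 hrp
    have hc2 : c^2 = 128*π/7 := Real.sq_sqrt (by positivity)
    have hδsq : δ^2 = (128*π/7) * (n:ℝ) ^ (-(2 / ((d:ℝ) - 1))) := by
      rw [hδdef, mul_pow, hc2]
      congr 1
      rw [← Real.rpow_natCast ((n:ℝ) ^ (-(1/((d:ℝ)-1)))) 2, ← Real.rpow_mul hn0.le]
      congr 1
      push_cast
      ring
    have hKδ : K = (d:ℝ) * δ^2 / 2 := by
      rw [hKdef, hδsq]; ring
    have hδ2 : (d:ℝ) * δ^2 / 2 < 1 := by rw [← hKδ]; exact hK1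
    have hδsq1 : δ^2 < 1 := by nlinarith [sq_nonneg δ]
    have hδ1 : δ ≤ 1 := by linarith [sq_nonneg (δ - 1)]
    have hnet : ∃ S : Finset (EuclideanSpace ℝ (Fin d)),
        (S : Set (EuclideanSpace ℝ (Fin d))) ⊆ Metric.sphere 0 1 ∧ S.card ≤ n ∧
        ∀ x ∈ Metric.sphere (0 : EuclideanSpace ℝ (Fin d)) 1, ∃ p ∈ S, dist x p ≤ δ := by
      rcases eq_or_lt_of_le hd with hd2 | hd3
      · subst hd2
        obtain ⟨S, hS1, hS2, hS3⟩ := ipva_polygon_net n hn1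
        refine ⟨S, hS1, hS2, fun x hx => ?_⟩
        obtain ⟨p, hp, hdist⟩ := hS3 x hx
        refine ⟨p, hp, hdist.trans ?_⟩
        have he : (-(1 / (((2:ℕ):ℝ) - 1))) = (-1 : ℝ) := by norm_num
        rw [hδdef, he, Real.rpow_neg_one]
        rw [div_eq_mul_inv]
        apply mul_le_mul_of_nonneg_right ?_ (inv_nonneg.2 hn0.le)
        have h2pc : 2*π ≤ c := by
          by_contra hcon
          push_neg at hcon
          have hsq : c^2 < (2*π)^2 := by nlinarith
          rw [hc2] at hsq
          nlinarith [Real.pi_le_four]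
        exact h2pc
      · obtain ⟨S, hS1, hS3, hpack⟩ := ipva_exists_net d hd1 δ hδpos (by linarith)
        have hcard := ipva_net_card_le d n S.card (by omega) hn1 δ c hcdef hδdef hδpos
          (by linarith) hpack
        exact ⟨S, hS1, hcard, hS3⟩
    obtain ⟨S, hSsph, hScard, hSnet⟩ := hnet
    obtain ⟨V, hSV, hVcard, hVsub⟩ := ipva_pad_finset d n hd1 hn1 S hSsph hScard
    haveI : Nonempty (Fin d) := ⟨⟨0, by omega⟩⟩
    have hhullS := ipva_net_hull S δ hSsph hSnet
    have hhull : Metric.closedBall (0 : EuclideanSpace ℝ (Fin d)) (1 - δ^2/2) ⊆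
        convexHull ℝ (V : Set (EuclideanSpace ℝ (Fin d))) :=
      hhullS.trans (convexHull_mono (Finset.coe_subset.2 hSV))
    have hr0 : 0 ≤ 1 - δ^2/2 := by nlinarith
    have hdef := ipva_deficit_le d V (1 - δ^2/2) hr0 hhull
    have hbern : 1 - (1 - δ^2/2)^d ≤ (d:ℝ) * δ^2 / 2 := by
      have h := one_add_mul_le_pow (show (-2:ℝ) ≤ -(δ^2/2) by nlinarith) d
      have he : ((1:ℝ) + -(δ^2/2)) = 1 - δ^2/2 := by ring
      rw [he] at h
      have he2 : (d:ℝ) * -(δ^2/2) = -((d:ℝ)*δ^2/2) := by ring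
      rw [he2] at h
      linarith
    refine ⟨V, hVcard, hVsub, ?_⟩
    calc vB - (volume (convexHull ℝ (V : Set (EuclideanSpace ℝ (Fin d))))).toReal
        ≤ (1 - (1 - δ^2/2)^d) * vB := hdef
      _ ≤ K * vB := by
          rw [hKδ]
          exact mul_le_mul_of_nonneg_right hbern hvB0
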